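/- Let f be a polynomial with rational coefficients of degree d ≥ 2. Then g(x) := res_y(f′(y), f(y) − x) is a polynomial in ℚ[x] of degree d − 1 whose set of roots equals the set of finite critical values of f; moreover, if the leading coefficient of f is an integer, so is the leading coefficient of g. -/

import Mathlib

open Polynomial

/-- The Sylvester matrix of two polynomials `p` (regarded as having degree `m`) and
`q` (regarded as having degree `n`). -/
noncomputable def sylvesterMatrix {R : Type*} [CommRing R] (m n : ℕ) (p q : R[X]) :
    Matrix (Fin (n + m)) (Fin (n + m)) R :=
  Matrix.of fun i j =>
    if (i : ℕ) < n then
      (if (i : ℕ) ≤ (j : ℕ) ∧ (j : ℕ) ≤ (i : ℕ) + m then p.coeff (m + (i : ℕ) - (j : ℕ)) else 0)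
    else
      (if (i : ℕ) - n ≤ (j : ℕ) ∧ (j : ℕ) ≤ (i : ℕ) - n + n then
        q.coeff (n + ((i : ℕ) - n) - (j : ℕ)) else 0)

/-- The resultant of `p` (of degree `m`) and `q` (of degree `n`). -/
noncomputable def resultant {R : Type*} [CommRing R] (m n : ℕ) (p q : R[X]) : R :=
  (sylvesterMatrix m n p q).det

namespace SylAux

variable {R : Type*} [CommRing R]

lemma coeff_finSum_monomial {N : ℕ} (w : Fin N → R) (k : ℕ) :
    (∑ j : Fin N, monomial (j : ℕ) (w j)).coeff k = if h : k < N then w ⟨k, h⟩ else 0 := by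
  rw [finset_sum_coeff]
  split_ifs with h
  · rw [Finset.sum_eq_single (⟨k, h⟩ : Fin N)]
    · simp [coeff_monomial]
    · intro b _ hb
      rw [coeff_monomial, if_neg]
      intro hbk
      exact hb (Fin.ext hbk)
    · simp
  · apply Finset.sum_eq_zero
    intro b _
    rw [coeff_monomial, if_neg]
    intro hbk
    exact h (hbk ▸ b.isLt)

lemma reflect_reflect' (N : ℕ) (p : R[X]) : reflect N (reflect N p) = p := by
  ext i
  rw [coeff_reflect, coeff_reflect, revAt_invol]

lemma reflect_ne_zero {N : ℕ} {p : R[X]} (hp : p ≠ 0) : reflect N p ≠ 0 := by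
  intro h
  apply hp
  rw [← reflect_reflect' N p, h, reflect_zero]

lemma natDegree_reflect_le {N : ℕ} {p : R[X]} (hp : p.natDegree ≤ N) :
    (reflect N p).natDegree ≤ N := by
  apply natDegree_le_iff_coeff_eq_zero.2
  intro k hk
  rw [coeff_reflect]
  show p.coeff (if k ≤ N then N - k else k) = 0
  rw [if_neg (by omega)]
  exact coeff_eq_zero_of_natDegree_lt (lt_of_le_of_lt hp hk)

/-- coefficient description of `reflect` for polys of degree ≤ m. -/
lemma coeff_reflect' {m : ℕ} {p : R[X]} (hp : p.natDegree ≤ m) (t : ℕ) :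
    (reflect m p).coeff t = if t ≤ m then p.coeff (m - t) else 0 := by
  rw [coeff_reflect]
  show p.coeff (if t ≤ m then m - t else t) = _
  split_ifs with h
  · rfl
  · exact coeff_eq_zero_of_natDegree_lt (by omega)

lemma gen {e m : ℕ} {p : R[X]} (hp : p.natDegree ≤ m) (k : ℕ) :
    (if e ≤ k ∧ k ≤ e + m then p.coeff (m + e - k) else 0) = (X ^ e * reflect m p).coeff k := by
  rw [coeff_X_pow_mul', coeff_reflect' hp]
  by_cases h1 : e ≤ k
  · by_cases h2 : k ≤ e + m
    · rw [if_pos ⟨h1, h2⟩, if_pos h1, if_pos (by omega)]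
      congr 1
      omega
    · rw [if_neg (by omega), if_pos h1, if_neg (by omega)]
  · rw [if_neg (by omega), if_neg h1]

/-- Row `i < n` of the Sylvester matrix, as a polynomial. -/
lemma rowPoly_p {m n : ℕ} {p q : R[X]} (hp : p.natDegree ≤ m)
    (i : Fin (n + m)) (hi : (i : ℕ) < n) :
    (∑ j : Fin (n + m), monomial (j : ℕ) (sylvesterMatrix m n p q i j))
      = X ^ (i : ℕ) * reflect m p := by
  ext k
  rw [coeff_finSum_monomial]
  by_cases hk : k < n + m
  · rw [dif_pos hk, ← gen hp k]
    show (if (i : ℕ) < n then _ else _) = _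
    rw [if_pos hi]
  · rw [dif_neg hk, ← gen hp k, if_neg (by omega)]

/-- Row `i ≥ n` of the Sylvester matrix, as a polynomial. -/
lemma rowPoly_q {m n : ℕ} {p q : R[X]} (hq : q.natDegree ≤ n)
    (i : Fin (n + m)) (hi : ¬ (i : ℕ) < n) :
    (∑ j : Fin (n + m), monomial (j : ℕ) (sylvesterMatrix m n p q i j))
      = X ^ ((i : ℕ) - n) * reflect n q := by
  ext k
  rw [coeff_finSum_monomial]
  by_cases hk : k < n + m
  · rw [dif_pos hk, ← gen hq k]
    show (if (i : ℕ) < n then _ else _) = _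
    rw [if_neg hi]
  · rw [dif_neg hk, ← gen hq k, if_neg (by omega)]


variable {m n : ℕ}

/-- head part of a vector as a polynomial -/
noncomputable def aPart (n m : ℕ) (v : Fin (n + m) → R) : R[X] :=
  ∑ i : Fin n, monomial (i : ℕ) (v (Fin.castLE (Nat.le_add_right n m) i))

/-- tail part of a vector as a polynomial -/
noncomputable def bPart (n m : ℕ) (v : Fin (n + m) → R) : R[X] :=
  ∑ i : Fin m, monomial (i : ℕ) (v (Fin.natAdd n i))

lemma coeff_aPart (v : Fin (n + m) → R) (k : ℕ) :
    (aPart n m v).coeff k = if h : k < n then v (Fin.castLE (Nat.le_add_right n m) ⟨k, h⟩) else 0 :=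
  coeff_finSum_monomial _ k

lemma coeff_bPart (v : Fin (n + m) → R) (k : ℕ) :
    (bPart n m v).coeff k = if h : k < m then v (Fin.natAdd n ⟨k, h⟩) else 0 :=
  coeff_finSum_monomial _ k

lemma filter_lt_eq_map :
    (Finset.univ.filter (fun i : Fin (n + m) => (i : ℕ) < n))
      = Finset.univ.map (Fin.castLEEmb (Nat.le_add_right n m)) := by
  ext i
  simp only [Finset.mem_filter, Finset.mem_univ, true_and, Finset.mem_map]
  constructor
  · intro h
    exact ⟨⟨(i : ℕ), h⟩, Fin.ext rfl⟩
  · rintro ⟨a, rfl⟩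
    exact a.isLt

lemma filter_not_lt_eq_map :
    (Finset.univ.filter (fun i : Fin (n + m) => ¬ (i : ℕ) < n))
      = Finset.univ.map (Fin.natAddEmb n) := by
  ext i
  simp only [Finset.mem_filter, Finset.mem_univ, true_and, Finset.mem_map]
  constructor
  · intro h
    exact ⟨⟨(i : ℕ) - n, by omega⟩, Fin.ext (by simp [Fin.natAdd]; omega)⟩
  · rintro ⟨a, rfl⟩
    exact Nat.not_lt.2 (Nat.le_add_right _ _)

/-- The master identity: the linear combination of the rows of the Sylvester matrix with
coefficients `v` corresponds to the polynomial `aPart v * reflect m p + bPart v * reflect n q`. -/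
lemma master {p q : R[X]} (hp : p.natDegree ≤ m) (hq : q.natDegree ≤ n) (v : Fin (n + m) → R) :
    aPart n m v * reflect m p + bPart n m v * reflect n q
      = ∑ j : Fin (n + m), monomial (j : ℕ) (Matrix.vecMul v (sylvesterMatrix m n p q) j) := by
  have hvm : ∀ j : Fin (n + m), Matrix.vecMul v (sylvesterMatrix m n p q) j
      = ∑ i : Fin (n + m), v i * sylvesterMatrix m n p q i j := by
    intro j
    simp [Matrix.vecMul, dotProduct]
  calc aPart n m v * reflect m p + bPart n m v * reflect n q
      = ∑ i : Fin (n + m), C (v i) * ∑ j : Fin (n + m),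
          monomial (j : ℕ) (sylvesterMatrix m n p q i j) := by
        rw [← Finset.sum_filter_add_sum_filter_not Finset.univ
          (fun i : Fin (n + m) => (i : ℕ) < n)]
        congr 1
        · rw [filter_lt_eq_map, Finset.sum_map, aPart, Finset.sum_mul]
          apply Finset.sum_congr rfl
          intro i _
          rw [rowPoly_p hp _ (by simpa using i.isLt), ← C_mul_X_pow_eq_monomial, mul_assoc]
          rfl
        · rw [filter_not_lt_eq_map, Finset.sum_map, bPart, Finset.sum_mul]
          apply Finset.sum_congr rfl
          intro i _
          rw [rowPoly_q hq _ (by exact Nat.not_lt.2 (Nat.le_add_right _ _)), ← C_mul_X_pow_eq_monomial,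
            mul_assoc]
          have h1 : ((Fin.natAddEmb n i : Fin (n + m)) : ℕ) - n = (i : ℕ) := by
            exact Nat.add_sub_cancel_left n i
          rw [h1]
          rfl
    _ = ∑ j : Fin (n + m), monomial (j : ℕ) (Matrix.vecMul v (sylvesterMatrix m n p q) j) := by
        simp only [hvm, Finset.mul_sum]
        rw [Finset.sum_comm]
        apply Finset.sum_congr rfl
        intro j _
        rw [map_sum (monomial (j : ℕ))]
        apply Finset.sum_congr rfl
        intro i _
        rw [C_mul_monomial]


/-- Linear dependency characterization of vanishing resultant. -/
lemma resultant_eq_zero_iff_dependency {K : Type*} [Field K] {p q : K[X]}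
    (hp : p.natDegree ≤ m) (hq : q.natDegree ≤ n) :
    resultant m n p q = 0 ↔ ∃ a b : K[X], (a ≠ 0 ∨ b ≠ 0) ∧
      (∀ k, n ≤ k → a.coeff k = 0) ∧ (∀ k, m ≤ k → b.coeff k = 0) ∧
      a * reflect m p + b * reflect n q = 0 := by
  rw [_root_.resultant, ← Matrix.exists_vecMul_eq_zero_iff]
  constructor
  · rintro ⟨v, hv0, hv⟩
    refine ⟨aPart n m v, bPart n m v, ?_, ?_, ?_, ?_⟩
    · by_contra hc
      push_neg at hc
      apply hv0
      funext i
      by_cases hi : (i : ℕ) < n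
      · have := congrArg (fun r => r.coeff (i : ℕ)) hc.1
        simpa [coeff_aPart, hi, Fin.castLE] using this
      · have hkm : (i : ℕ) - n < m := by omega
        have := congrArg (fun r => r.coeff ((i : ℕ) - n)) hc.2
        simp only [coeff_aPart, coeff_bPart, coeff_zero, dif_pos hkm] at this
        rw [show Fin.natAdd n (⟨(i : ℕ) - n, hkm⟩ : Fin m) = i from Fin.ext (by
          simp [Fin.natAdd]; omega)] at this
        exact this
    · intro k hk
      rw [coeff_aPart, dif_neg (by omega)]
    · intro k hk
      rw [coeff_bPart, dif_neg (by omega)]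
    · rw [master hp hq, hv]
      simp
  · rintro ⟨a, b, hab, han, hbm, heq⟩
    refine ⟨fun i => if h : (i : ℕ) < n then a.coeff i else b.coeff ((i : ℕ) - n), ?_, ?_⟩
    · intro hc
      have hca : a = 0 := by
        ext k
        by_cases hk : k < n
        · have := congrFun hc (Fin.castLE (Nat.le_add_right n m) ⟨k, hk⟩)
          simpa [Fin.castLE, hk] using this
        · simp [han k (by omega)]
      have hcb : b = 0 := by
        ext k
        by_cases hk : k < m
        · have := congrFun hc (Fin.natAdd n ⟨k, hk⟩)
          simpa [Fin.natAdd] using this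
        · simp [hbm k (by omega)]
      rcases hab with h | h
      · exact h hca
      · exact h hcb
    · have hA : aPart n m (fun i => if h : (i : ℕ) < n then a.coeff i
          else b.coeff ((i : ℕ) - n)) = a := by
        ext k
        rw [coeff_aPart]
        by_cases h : k < n
        · rw [dif_pos h, dif_pos (show ((Fin.castLE (Nat.le_add_right n m) ⟨k, h⟩ : Fin (n + m))
            : ℕ) < n from h)]
          rfl
        · rw [dif_neg h]
          exact (han k (by omega)).symm
      have hB : bPart n m (fun i => if h : (i : ℕ) < n then a.coeff i
          else b.coeff ((i : ℕ) - n)) = b := by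
        ext k
        rw [coeff_bPart]
        by_cases h : k < m
        · rw [dif_pos h, dif_neg (show ¬ ((Fin.natAdd n (⟨k, h⟩ : Fin m) : Fin (n + m))
            : ℕ) < n from by simp [Fin.natAdd])]
          congr 1
          simp [Fin.natAdd]
        · rw [dif_neg h]
          exact (hbm k (by omega)).symm
      have hmaster := master hp hq (fun i => if h : (i : ℕ) < n then a.coeff i
          else b.coeff ((i : ℕ) - n))
      rw [hA, hB, heq] at hmaster
      funext j
      have h2 := congrArg (fun r : K[X] => r.coeff (j : ℕ)) hmaster.symm
      simp only [coeff_zero] at h2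
      rw [coeff_finSum_monomial, dif_pos j.isLt] at h2
      exact h2

/-- Vanishing of the resultant over an algebraically closed field detects common roots. -/
lemma resultant_eq_zero_iff_common_root {K : Type*} [Field K] [IsAlgClosed K] {m n : ℕ}
    {p q : K[X]} (hm : 0 < m) (hn : 0 < n) (hp : p.natDegree = m) (hq : q.natDegree = n) :
    resultant m n p q = 0 ↔ ∃ γ : K, p.eval γ = 0 ∧ q.eval γ = 0 := by
  classical
  have hp0 : p ≠ 0 := fun h => by simp [h] at hp; omega
  have hq0 : q ≠ 0 := fun h => by simp [h] at hq; omega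
  rw [resultant_eq_zero_iff_dependency hp.le hq.le]
  constructor
  · rintro ⟨a, b, hab, han, hbm, heq⟩
    have hdega : a.natDegree ≤ n - 1 := by
      apply natDegree_le_iff_coeff_eq_zero.2
      intro k hk
      exact han k (by omega)
    have hdegb : b.natDegree ≤ m - 1 := by
      apply natDegree_le_iff_coeff_eq_zero.2
      intro k hk
      exact hbm k (by omega)
    have key : reflect (n - 1) a * p + reflect (m - 1) b * q = 0 := by
      have h1 : reflect ((n - 1) + m) (a * reflect m p)
          = reflect (n - 1) a * p := by
        rw [reflect_mul a (reflect m p) hdega (natDegree_reflect_le hp.le),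
          reflect_reflect']
      have h2 : reflect ((m - 1) + n) (b * reflect n q)
          = reflect (m - 1) b * q := by
        rw [reflect_mul b (reflect n q) hdegb (natDegree_reflect_le hq.le),
          reflect_reflect']
      have hmn : (m - 1) + n = (n - 1) + m := by omega
      calc reflect (n - 1) a * p + reflect (m - 1) b * q
          = reflect ((n - 1) + m) (a * reflect m p + b * reflect n q) := by
            rw [reflect_add, h1, ← hmn, h2]
        _ = 0 := by rw [heq, reflect_zero]
    by_contra hroot
    push_neg at hroot
    -- p and q are coprime
    have hcop : IsCoprime p q := by
      rw [← EuclideanDomain.gcd_isUnit_iff]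
      by_contra hunit
      have hgcd0 : EuclideanDomain.gcd p q ≠ 0 := fun h =>
        hp0 (EuclideanDomain.gcd_eq_zero_iff.1 h).1
      have : (EuclideanDomain.gcd p q).degree ≠ 0 := by
        intro h
        exact hunit (isUnit_iff_degree_eq_zero.2 h)
      obtain ⟨γ, hγ⟩ := IsAlgClosed.exists_root _ this
      exact hroot γ
        (eval_eq_zero_of_dvd_of_eval_eq_zero (EuclideanDomain.gcd_dvd_left p q) hγ)
        (eval_eq_zero_of_dvd_of_eval_eq_zero (EuclideanDomain.gcd_dvd_right p q) hγ)
    -- case analysis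
    by_cases ha : a = 0
    · have hb : b ≠ 0 := by tauto
      rw [ha, zero_mul, zero_add] at heq
      exact (mul_ne_zero hb (reflect_ne_zero hq0)) heq
    · have ha' : reflect (n - 1) a ≠ 0 := reflect_ne_zero ha
      have hdvd : q ∣ reflect (n - 1) a * p := by
        refine ⟨-(reflect (m - 1) b), ?_⟩
        linear_combination key
      have hdvd' : q ∣ reflect (n - 1) a := (hcop.symm.dvd_of_dvd_mul_right) hdvd
      have := natDegree_le_of_dvd hdvd' ha'
      have := natDegree_reflect_le hdega
      omega
  · rintro ⟨γ, hpγ, hqγ⟩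
    obtain ⟨p₁, hp₁⟩ := (dvd_iff_isRoot.2 hpγ : (X - C γ) ∣ p)
    obtain ⟨q₁, hq₁⟩ := (dvd_iff_isRoot.2 hqγ : (X - C γ) ∣ q)
    have hp₁0 : p₁ ≠ 0 := fun h => hp0 (by rw [hp₁, h, mul_zero])
    have hq₁0 : q₁ ≠ 0 := fun h => hq0 (by rw [hq₁, h, mul_zero])
    have hdq₁ : q₁.natDegree = n - 1 := by
      have := hq ▸ hq₁ ▸ natDegree_mul (X_sub_C_ne_zero γ) hq₁0
      rw [natDegree_X_sub_C] at this
      omega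
    have hdp₁ : p₁.natDegree = m - 1 := by
      have := hp ▸ hp₁ ▸ natDegree_mul (X_sub_C_ne_zero γ) hp₁0
      rw [natDegree_X_sub_C] at this
      omega
    refine ⟨reflect (n - 1) q₁, reflect (m - 1) (-p₁), Or.inl (reflect_ne_zero hq₁0), ?_, ?_, ?_⟩
    · intro k hk
      exact coeff_eq_zero_of_natDegree_lt (lt_of_le_of_lt (natDegree_reflect_le hdq₁.le) (by omega))
    · intro k hk
      refine coeff_eq_zero_of_natDegree_lt (lt_of_le_of_lt (natDegree_reflect_le ?_) (by omega))
      rw [natDegree_neg]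
      exact hdp₁.le
    · have h1 : reflect (n - 1) q₁ * reflect m p = reflect ((n - 1) + m) (q₁ * p) :=
        (reflect_mul q₁ p hdq₁.le hp.le).symm
      have h2 : reflect (m - 1) (-p₁) * reflect n q = reflect ((m - 1) + n) ((-p₁) * q) := by
        rw [← reflect_mul (-p₁) q (by rw [natDegree_neg]; exact hdp₁.le) hq.le]
      have hmn : (m - 1) + n = (n - 1) + m := by omega
      rw [h1, h2, hmn, ← reflect_add]
      have : q₁ * p + (-p₁) * q = 0 := by
        rw [hp₁, hq₁]
        ring
      rw [this, reflect_zero]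


section RatSide

/-- The scalar matrix computing the top coefficient of the resultant. -/
def Mq (u : ℚ[X]) (m n : ℕ) : Matrix (Fin (n + m)) (Fin (n + m)) ℚ :=
  Matrix.of fun i j =>
    if (i : ℕ) < n then
      (if (i : ℕ) ≤ (j : ℕ) ∧ (j : ℕ) ≤ (i : ℕ) + m then u.coeff (m + (i : ℕ) - (j : ℕ)) else 0)
    else if ((j : ℕ)) = (i : ℕ) then (-1 : ℚ) else 0

variable (u w : ℚ[X]) (m n : ℕ)

lemma Qcoeff (t : ℕ) : (w.map (C : ℚ →+* ℚ[X]) - C X).coeff t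
    = C (w.coeff t) - (if t = 0 then X else 0) := by
  rw [coeff_sub, coeff_map, coeff_C]

lemma entryP {i : Fin (n + m)} (hi : (i : ℕ) < n) (j : Fin (n + m)) :
    sylvesterMatrix m n (u.map (C : ℚ →+* ℚ[X])) (w.map (C : ℚ →+* ℚ[X]) - C X) i j
      = C (Mq u m n i j) := by
  show (if (i : ℕ) < n then _ else _) = _
  rw [if_pos hi, Mq]
  show _ = C (if (i : ℕ) < n then _ else _)
  rw [if_pos hi, apply_ite C, map_zero, coeff_map]

lemma entryQ {i : Fin (n + m)} (hi : ¬ (i : ℕ) < n) (j : Fin (n + m)) :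
    sylvesterMatrix m n (u.map (C : ℚ →+* ℚ[X])) (w.map (C : ℚ →+* ℚ[X]) - C X) i j
      = if (i : ℕ) - n ≤ (j : ℕ) ∧ (j : ℕ) ≤ (i : ℕ) - n + n then
          C (w.coeff (n + ((i : ℕ) - n) - (j : ℕ))) - (if (n + ((i : ℕ) - n) - (j : ℕ)) = 0
            then X else 0)
        else 0 := by
  show (if (i : ℕ) < n then _ else _) = _
  rw [if_neg hi]
  by_cases hc : (i : ℕ) - n ≤ (j : ℕ) ∧ (j : ℕ) ≤ (i : ℕ) - n + n
  · rw [if_pos hc, if_pos hc, Qcoeff]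
  · rw [if_neg hc, if_neg hc]

lemma entry_natDegree_le (σ : Equiv.Perm (Fin (n + m))) (i : Fin (n + m)) :
    (sylvesterMatrix m n (u.map (C : ℚ →+* ℚ[X])) (w.map (C : ℚ →+* ℚ[X]) - C X)
      (σ i) i).natDegree ≤ if n ≤ (σ i : ℕ) ∧ σ i = i then 1 else 0 := by
  by_cases hr : (σ i : ℕ) < n
  · rw [entryP u w m n hr i, if_neg (by rintro ⟨h1, -⟩; omega)]
    exact le_of_eq (natDegree_C _)
  · rw [entryQ u w m n hr i]
    by_cases hc : (σ i : ℕ) - n ≤ (i : ℕ) ∧ (i : ℕ) ≤ (σ i : ℕ) - n + n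
    · rw [if_pos hc]
      by_cases hfix : σ i = i
      · rw [if_pos (show n ≤ (σ i : ℕ) ∧ σ i = i from ⟨by omega, hfix⟩)]
        refine (natDegree_sub_le _ _).trans ?_
        simp only [natDegree_C]
        split_ifs
        · simp [natDegree_X]
        · simp
      · rw [if_neg (show ¬ (n ≤ (σ i : ℕ) ∧ σ i = i) from fun h => hfix h.2)]
        rw [if_neg (show ¬ (n + ((σ i : ℕ) - n) - (i : ℕ) = 0) from by
          intro h0
          exact hfix (Fin.ext (by omega))), sub_zero, natDegree_C]
    · rw [if_neg hc]
      simp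

lemma sigma_coeff (hm : 0 < m) (σ : Equiv.Perm (Fin (n + m))) :
    (∏ i, sylvesterMatrix m n (u.map (C : ℚ →+* ℚ[X])) (w.map (C : ℚ →+* ℚ[X]) - C X)
      (σ i) i).coeff m = ∏ i, Mq u m n (σ i) i := by
  by_cases hcase : ∀ i, n ≤ (σ i : ℕ) → σ i = i
  · -- σ fixes the tail rows
    have htail : ∀ i : Fin (n + m), ¬ ((i : ℕ) < n) → σ i = i := by
      intro i hi
      have h1 : σ (σ⁻¹ i) = i := σ.apply_symm_apply i
      have h2 := hcase (σ⁻¹ i) (by rw [h1]; omega)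
      rw [h1] at h2
      conv_lhs => rw [h2]
      exact h1
    have hhead : ∀ i : Fin (n + m), (i : ℕ) < n → (σ i : ℕ) < n := by
      intro i hi
      by_contra hc
      have h1 := htail (σ i) hc
      have h2 := σ.injective h1
      rw [h2] at hc
      exact hc hi
    rw [← Finset.prod_filter_mul_prod_filter_not Finset.univ
        (fun i : Fin (n + m) => (i : ℕ) < n),
      ← Finset.prod_filter_mul_prod_filter_not Finset.univ
        (fun i : Fin (n + m) => (i : ℕ) < n)
        (fun i => Mq u m n (σ i) i)]
    have hP : ∏ i ∈ Finset.univ.filter (fun i : Fin (n + m) => (i : ℕ) < n),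
        sylvesterMatrix m n (u.map (C : ℚ →+* ℚ[X])) (w.map (C : ℚ →+* ℚ[X]) - C X) (σ i) i
        = C (∏ i ∈ Finset.univ.filter (fun i : Fin (n + m) => (i : ℕ) < n),
            Mq u m n (σ i) i) := by
      rw [map_prod]
      apply Finset.prod_congr rfl
      intro i hi
      rw [Finset.mem_filter] at hi
      exact entryP u w m n (hhead i hi.2) i
    have hQ : ∏ i ∈ Finset.univ.filter (fun i : Fin (n + m) => ¬ (i : ℕ) < n),
        sylvesterMatrix m n (u.map (C : ℚ →+* ℚ[X])) (w.map (C : ℚ →+* ℚ[X]) - C X) (σ i) i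
        = (C (w.coeff 0) - X) ^ m := by
      rw [Finset.prod_congr rfl (g := fun _ => C (w.coeff 0) - X) (by
        intro i hi
        rw [Finset.mem_filter] at hi
        have hfix := htail i hi.2
        rw [hfix, entryQ u w m n hi.2 i, if_pos ⟨by omega, by omega⟩]
        have h0 : n + ((i : ℕ) - n) - (i : ℕ) = 0 := by omega
        rw [h0, if_pos rfl]), Finset.prod_const]
      congr 1
      rw [filter_not_lt_eq_map, Finset.card_map, Finset.card_univ, Fintype.card_fin]
    have hQ' : ∏ i ∈ Finset.univ.filter (fun i : Fin (n + m) => ¬ (i : ℕ) < n),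
        Mq u m n (σ i) i = (-1 : ℚ) ^ m := by
      rw [Finset.prod_congr rfl (g := fun _ => (-1 : ℚ)) (by
        intro i hi
        rw [Finset.mem_filter] at hi
        have hfix := htail i hi.2
        rw [hfix, Mq]
        show (if (i : ℕ) < n then _ else _) = _
        rw [if_neg hi.2, if_pos rfl]), Finset.prod_const]
      congr 1
      rw [filter_not_lt_eq_map, Finset.card_map, Finset.card_univ, Fintype.card_fin]
    rw [hP, hQ, hQ', coeff_C_mul]
    congr 1
    have hneg : (C (w.coeff 0) - X) ^ m = (-1 : ℚ[X]) ^ m * (X - C (w.coeff 0)) ^ m := by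
      rw [← mul_pow]
      congr 1
      ring
    rw [hneg]
    have hmonic : ((X - C (w.coeff 0)) ^ m).coeff m = 1 := by
      have h1 : ((X - C (w.coeff 0)) ^ m).Monic := (monic_X_sub_C _).pow m
      have h2 : ((X - C (w.coeff 0)) ^ m).natDegree = m := by
        rw [natDegree_pow, natDegree_X_sub_C, mul_one]
      have h3 := h1.coeff_natDegree
      rw [h2] at h3
      exact h3
    have hC : ((-1 : ℚ[X])) ^ m = C ((-1 : ℚ) ^ m) := by
      rw [map_pow, map_neg, map_one]
    rw [hC, coeff_C_mul, hmonic, mul_one]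
  · -- σ moves some tail row
    push_neg at hcase
    obtain ⟨i0, hn0, hne⟩ := hcase
    have hRHS : ∏ i, Mq u m n (σ i) i = 0 := by
      apply Finset.prod_eq_zero (Finset.mem_univ i0)
      rw [Mq]
      show (if (σ i0 : ℕ) < n then _ else _) = _
      rw [if_neg (by omega), if_neg (fun h => hne (Fin.ext h.symm))]
    rw [hRHS]
    apply coeff_eq_zero_of_natDegree_lt
    have hsum : ∑ i, (if n ≤ (σ i : ℕ) ∧ σ i = i then 1 else 0)
        = (Finset.univ.filter (fun i : Fin (n + m) => n ≤ (σ i : ℕ) ∧ σ i = i)).card := by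
      simp [Finset.sum_boole]
    have hcard : (Finset.univ.filter
        (fun i : Fin (n + m) => n ≤ (σ i : ℕ) ∧ σ i = i)).card ≤ m - 1 := by
      have hsub : Finset.univ.filter (fun i : Fin (n + m) => n ≤ (σ i : ℕ) ∧ σ i = i)
          ⊆ (Finset.univ.filter (fun i : Fin (n + m) => ¬ (i : ℕ) < n)).erase (σ i0) := by
        intro i hi
        rw [Finset.mem_filter] at hi
        obtain ⟨-, h1, h2⟩ := hi
        rw [Finset.mem_erase, Finset.mem_filter]
        refine ⟨?_, Finset.mem_univ _, by rw [← h2]; omega⟩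
        intro hcon
        subst hcon
        exact hne (σ.injective h2)
      refine (Finset.card_le_card hsub).trans ?_
      rw [Finset.card_erase_of_mem (by rw [Finset.mem_filter]; exact ⟨Finset.mem_univ _, by omega⟩)]
      have : (Finset.univ.filter (fun i : Fin (n + m) => ¬ (i : ℕ) < n)).card = m := by
        rw [filter_not_lt_eq_map, Finset.card_map, Finset.card_univ, Fintype.card_fin]
      omega
    calc (∏ i, sylvesterMatrix m n (u.map (C : ℚ →+* ℚ[X]))
          (w.map (C : ℚ →+* ℚ[X]) - C X) (σ i) i).natDegree
        ≤ ∑ i, (sylvesterMatrix m n (u.map (C : ℚ →+* ℚ[X]))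
          (w.map (C : ℚ →+* ℚ[X]) - C X) (σ i) i).natDegree := natDegree_prod_le _ _
      _ ≤ ∑ i, (if n ≤ (σ i : ℕ) ∧ σ i = i then 1 else 0) :=
          Finset.sum_le_sum (fun i _ => entry_natDegree_le u w m n σ i)
      _ < m := by rw [hsum]; omega

lemma det_Mq : (Mq u m n).det = (-1 : ℚ) ^ m * (u.coeff m) ^ n := by
  rw [← Matrix.det_submatrix_equiv_self finSumFinEquiv (Mq u m n)]
  have hsub : (Mq u m n).submatrix finSumFinEquiv finSumFinEquiv
      = Matrix.fromBlocks
        (Matrix.of fun i j : Fin n => if (i : ℕ) ≤ (j : ℕ) ∧ (j : ℕ) ≤ (i : ℕ) + m then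
          u.coeff (m + (i : ℕ) - (j : ℕ)) else 0)
        (Matrix.of fun (i : Fin n) (j : Fin m) => if (i : ℕ) ≤ n + (j : ℕ) ∧ n + (j : ℕ) ≤ (i : ℕ) + m then
          u.coeff (m + (i : ℕ) - (n + (j : ℕ))) else 0)
        0
        (-(1 : Matrix (Fin m) (Fin m) ℚ)) := by
    ext i j
    cases i with
    | inl i =>
      cases j with
      | inl j =>
        simp only [Matrix.submatrix_apply, finSumFinEquiv_apply_left, Matrix.fromBlocks_apply₁₁,
          Mq, Matrix.of_apply, Fin.coe_castAdd]
        rw [if_pos i.isLt]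
      | inr j =>
        simp only [Matrix.submatrix_apply, finSumFinEquiv_apply_left, finSumFinEquiv_apply_right,
          Matrix.fromBlocks_apply₁₂, Mq, Matrix.of_apply, Fin.coe_castAdd, Fin.coe_natAdd]
        rw [if_pos i.isLt]
    | inr i =>
      cases j with
      | inl j =>
        simp only [Matrix.submatrix_apply, finSumFinEquiv_apply_left, finSumFinEquiv_apply_right,
          Matrix.fromBlocks_apply₂₁, Mq, Matrix.of_apply, Fin.coe_castAdd, Fin.coe_natAdd,
          Matrix.zero_apply]
        rw [if_neg (by omega), if_neg (by omega)]
      | inr j =>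
        simp only [Matrix.submatrix_apply, finSumFinEquiv_apply_right,
          Matrix.fromBlocks_apply₂₂, Mq, Matrix.of_apply, Fin.coe_natAdd, Matrix.neg_apply,
          Matrix.one_apply]
        rw [if_neg (by omega)]
        by_cases h : i = j
        · rw [if_pos (show n + (j : ℕ) = n + (i : ℕ) by rw [h]), if_pos h]
        · rw [if_neg (show ¬ n + (j : ℕ) = n + (i : ℕ) from fun hc => h (Fin.ext (by omega))),
            if_neg h]
          norm_num
  rw [hsub, Matrix.det_fromBlocks_zero₂₁]
  have hA : (Matrix.of fun i j : Fin n => if (i : ℕ) ≤ (j : ℕ) ∧ (j : ℕ) ≤ (i : ℕ) + m then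
      u.coeff (m + (i : ℕ) - (j : ℕ)) else 0).det = (u.coeff m) ^ n := by
    rw [Matrix.det_of_upperTriangular (by
      intro i j hij
      simp only [Matrix.of_apply]
      rw [if_neg (by rintro ⟨h1, -⟩; exact absurd h1 (by simpa using hij))])]
    rw [Finset.prod_congr rfl (g := fun _ => u.coeff m) (by
      intro i _
      simp only [Matrix.of_apply]
      rw [if_pos ⟨le_refl _, by omega⟩]
      congr 1
      omega), Finset.prod_const, Finset.card_univ, Fintype.card_fin]
  have hD : (-(1 : Matrix (Fin m) (Fin m) ℚ)).det = (-1 : ℚ) ^ m := by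
    rw [Matrix.det_neg, Matrix.det_one, mul_one, Fintype.card_fin]
  rw [hA, hD]
  ring

lemma coeff_det (hm : 0 < m) :
    ((sylvesterMatrix m n (u.map (C : ℚ →+* ℚ[X])) (w.map (C : ℚ →+* ℚ[X]) - C X)).det).coeff m
      = (-1 : ℚ) ^ m * (u.coeff m) ^ n := by
  rw [Matrix.det_apply', finset_sum_coeff]
  have h1 : ∀ σ : Equiv.Perm (Fin (n + m)),
      (((Equiv.Perm.sign σ : ℤ) : ℚ[X]) * ∏ i, sylvesterMatrix m n (u.map (C : ℚ →+* ℚ[X]))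
        (w.map (C : ℚ →+* ℚ[X]) - C X) (σ i) i).coeff m
      = ((Equiv.Perm.sign σ : ℤ) : ℚ) * ∏ i, Mq u m n (σ i) i := by
    intro σ
    rw [← C_eq_intCast, coeff_C_mul, sigma_coeff u w m n hm σ]
  rw [Finset.sum_congr rfl (fun σ _ => h1 σ), ← Matrix.det_apply', det_Mq]

lemma natDegree_det_le :
    ((sylvesterMatrix m n (u.map (C : ℚ →+* ℚ[X]))
      (w.map (C : ℚ →+* ℚ[X]) - C X)).det).natDegree ≤ m := by
  rw [Matrix.det_apply']
  apply natDegree_sum_le_of_forall_le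
  intro σ _
  refine natDegree_mul_le.trans ?_
  rw [natDegree_intCast, zero_add]
  refine (natDegree_prod_le _ _).trans ?_
  calc ∑ i, (sylvesterMatrix m n (u.map (C : ℚ →+* ℚ[X]))
        (w.map (C : ℚ →+* ℚ[X]) - C X) (σ i) i).natDegree
      ≤ ∑ i : Fin (n + m), (if ¬ ((σ i : ℕ)) < n then 1 else 0) := by
        apply Finset.sum_le_sum
        intro i _
        refine (entry_natDegree_le u w m n σ i).trans ?_
        by_cases hr : ((σ i : ℕ)) < n
        · rw [if_neg (not_not_intro hr), if_neg (fun h => absurd h.1 (by omega))]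
        · rw [if_pos hr]
          split_ifs <;> omega
    _ = ∑ i : Fin (n + m), (if ¬ ((i : ℕ)) < n then 1 else 0) :=
        Equiv.sum_comp σ (fun i => if ¬ ((i : ℕ)) < n then 1 else 0)
    _ = m := by
        simp only [Finset.sum_boole, Nat.cast_id]
        rw [filter_not_lt_eq_map, Finset.card_map, Finset.card_univ, Fintype.card_fin]

lemma aeval_det (z : ℂ) :
    aeval z ((sylvesterMatrix m n (u.map (C : ℚ →+* ℚ[X]))
        (w.map (C : ℚ →+* ℚ[X]) - C X)).det)
      = (sylvesterMatrix m n (u.map (algebraMap ℚ ℂ))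
          (w.map (algebraMap ℚ ℂ) - C z)).det := by
  rw [show (aeval z ((sylvesterMatrix m n (u.map (C : ℚ →+* ℚ[X]))
      (w.map (C : ℚ →+* ℚ[X]) - C X)).det))
    = (((sylvesterMatrix m n (u.map (C : ℚ →+* ℚ[X]))
      (w.map (C : ℚ →+* ℚ[X]) - C X)).map ((aeval z : ℚ[X] →ₐ[ℚ] ℂ) : ℚ[X] →+* ℂ)).det)
    from RingHom.map_det _ _]
  congr 1
  ext i j
  rw [Matrix.map_apply]
  show (aeval z) (if (i : ℕ) < n then _ else _) = (if (i : ℕ) < n then _ else _)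
  by_cases hi : (i : ℕ) < n
  · rw [if_pos hi, if_pos hi, apply_ite (aeval z), map_zero, coeff_map, coeff_map, aeval_C]
  · rw [if_neg hi, if_neg hi, apply_ite (aeval z), map_zero, Qcoeff, map_sub, aeval_C,
      apply_ite (aeval z), aeval_X, map_zero, coeff_sub, coeff_map, coeff_C]

end RatSide

end SylAux

/-- Let `f ∈ ℚ[x]` have degree `d ≥ 2`.  Then `g(x) := res_y(f'(y), f(y) - x)` is a
polynomial in `ℚ[x]` of degree `d - 1` whose set of roots (in `ℚ̄ ⊆ ℂ`) equals the set
of finite critical values of `f`; moreover, if the leading coefficient of `f` is an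
integer, so is the leading coefficient of `g`. -/

theorem stmt_6 (f : ℚ[X]) (d : ℕ) (hd : 2 ≤ d) (hdeg : f.natDegree = d)
    (g : ℚ[X])
    (hg : g = resultant (d - 1) d ((derivative f).map (C : ℚ →+* ℚ[X]))
      (f.map (C : ℚ →+* ℚ[X]) - C X)) :
    g.natDegree = d - 1 ∧ g ≠ 0 ∧
    (∀ z : ℂ, (g.map (algebraMap ℚ ℂ)).IsRoot z
      ↔ ∃ γ : ℂ, ((derivative f).map (algebraMap ℚ ℂ)).eval γ = 0 ∧
          (f.map (algebraMap ℚ ℂ)).eval γ = z) ∧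
    ((∃ k : ℤ, f.leadingCoeff = (k : ℚ)) → ∃ k : ℤ, g.leadingCoeff = (k : ℚ)) := by
  have hm : 0 < d - 1 := by omega
  have hf0 : f ≠ 0 := by
    intro h
    rw [h, natDegree_zero] at hdeg
    omega
  have hlc : f.coeff d ≠ 0 := by
    rw [← hdeg]
    exact fun h => hf0 (leadingCoeff_eq_zero.1 h)
  have hdm1 : d - 1 + 1 = d := by omega
  have hucoeff : (derivative f).coeff (d - 1) = (d : ℚ) * f.coeff d := by
    rw [coeff_derivative, hdm1]
    have hcast : ((d - 1 : ℕ) : ℚ) + 1 = (d : ℚ) := by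
      push_cast [Nat.cast_sub (by omega : 1 ≤ d)]
      ring
    rw [hcast, mul_comm]
  have hune : (derivative f).coeff (d - 1) ≠ 0 := by
    rw [hucoeff]
    exact mul_ne_zero (Nat.cast_ne_zero.2 (by omega)) hlc
  have hgcoeff : g.coeff (d - 1) = (-1 : ℚ) ^ (d - 1) * ((derivative f).coeff (d - 1)) ^ d := by
    rw [hg]
    exact SylAux.coeff_det (derivative f) f (d - 1) d hm
  have hgne : g.coeff (d - 1) ≠ 0 := by
    rw [hgcoeff]
    exact mul_ne_zero (pow_ne_zero _ (by norm_num)) (pow_ne_zero _ hune)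
  have hdeg_g : g.natDegree = d - 1 :=
    le_antisymm (hg ▸ SylAux.natDegree_det_le (derivative f) f (d - 1) d)
      (le_natDegree_of_ne_zero hgne)
  have hg0 : g ≠ 0 := fun h => hgne (by rw [h, coeff_zero])
  have hud : (derivative f).natDegree = d - 1 :=
    le_antisymm (by simpa [hdeg] using natDegree_derivative_le f) (le_natDegree_of_ne_zero hune)
  refine ⟨hdeg_g, hg0, ?_, ?_⟩
  · intro z
    have hres : aeval z g = resultant (d - 1) d ((derivative f).map (algebraMap ℚ ℂ))
        (f.map (algebraMap ℚ ℂ) - C z) := by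
      rw [hg]
      exact SylAux.aeval_det (derivative f) f (d - 1) d z
    have hp' : ((derivative f).map (algebraMap ℚ ℂ)).natDegree = d - 1 := by
      rw [natDegree_map, hud]
    have hq' : (f.map (algebraMap ℚ ℂ) - C z).natDegree = d := by
      rw [natDegree_sub_C, natDegree_map, hdeg]
    rw [IsRoot.def, eval_map, ← aeval_def, hres,
      SylAux.resultant_eq_zero_iff_common_root hm (by omega) hp' hq']
    constructor
    · rintro ⟨γ, h1, h2⟩
      rw [eval_sub, eval_C, sub_eq_zero] at h2
      exact ⟨γ, h1, h2⟩
    · rintro ⟨γ, h1, h2⟩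
      exact ⟨γ, h1, by rw [eval_sub, eval_C, sub_eq_zero]; exact h2⟩
  · rintro ⟨k, hk⟩
    have hfd : f.coeff d = (k : ℚ) := by
      rw [← hk, leadingCoeff, hdeg]
    refine ⟨(-1) ^ (d - 1) * ((d : ℤ) * k) ^ d, ?_⟩
    rw [leadingCoeff, hdeg_g, hgcoeff, hucoeff, hfd]
    push_cast
    ring
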